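/- Let p be a homogeneous polynomial of degree j in two real variables. Define q(x) = Σ_{k=0}^{⌊j/2⌋} ((-1)^k (j-k)! / ((j+1)! (k+1)!)) (|x|^2/4)^{k+1} (Δ^k p)(x). Then Δq = p. -/

import Mathlib

open MvPolynomial

private lemma deg2 (s : Fin 2 →₀ ℕ) : s.degree = s 0 + s 1 := by
  rw [Finsupp.degree_apply, Finset.sum_subset (Finset.subset_univ _)
    (fun i _ hi => Finsupp.notMem_support_iff.mp hi), Fin.sum_univ_two]

private lemma X_mul_pderiv_monomial (i : Fin 2) (s : Fin 2 →₀ ℕ) (a : ℝ) :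
    X i * pderiv i (monomial s a) = C (s i : ℝ) * monomial s a := by
  rw [pderiv_monomial]
  rcases Nat.eq_zero_or_pos (s i) with h | h
  · simp [h]
  · have hle : Finsupp.single i 1 ≤ s := by
      rw [Finsupp.single_le_iff]; exact h
    rw [C_mul_monomial, X, monomial_mul, one_mul, add_comm, tsub_add_cancel_of_le hle,
      mul_comm]

private lemma degree_of_mem_support {n : ℕ} {p : MvPolynomial (Fin 2) ℝ}
    (hp : p.IsHomogeneous n) {s : Fin 2 →₀ ℕ} (hs : s ∈ p.support) : s.degree = n := by
  by_contra h
  exact mem_support_iff.mp hs (hp.coeff_eq_zero h)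

private lemma euler {n : ℕ} {p : MvPolynomial (Fin 2) ℝ} (hp : p.IsHomogeneous n) :
    X 0 * pderiv 0 p + X 1 * pderiv 1 p = C (n : ℝ) * p := by
  conv_lhs => rw [p.as_sum]
  conv_rhs => rw [p.as_sum]
  rw [map_sum, map_sum, Finset.mul_sum, Finset.mul_sum, Finset.mul_sum,
    ← Finset.sum_add_distrib]
  refine Finset.sum_congr rfl fun s hs => ?_
  rw [X_mul_pderiv_monomial, X_mul_pderiv_monomial, ← add_mul, ← map_add,
    ← Nat.cast_add, ← deg2, degree_of_mem_support hp hs]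

private lemma pderiv_isHomog {n : ℕ} {p : MvPolynomial (Fin 2) ℝ}
    (hp : p.IsHomogeneous n) (i : Fin 2) : (pderiv i p).IsHomogeneous (n - 1) := by
  conv => enter [1]; rw [p.as_sum]
  rw [map_sum]
  refine IsHomogeneous.sum _ _ _ fun s hs => ?_
  rw [pderiv_monomial]
  rcases Nat.eq_zero_or_pos (s i) with h | h
  · rw [h]; norm_num; exact isHomogeneous_zero _ _ _
  · apply isHomogeneous_monomial
    have hd := degree_of_mem_support hp hs
    rw [deg2] at hd ⊢
    have h0 := Finsupp.tsub_apply s (Finsupp.single i 1) 0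
    have h1 := Finsupp.tsub_apply s (Finsupp.single i 1) 1
    fin_cases i <;> simp [Finsupp.single_apply] at h h0 h1 ⊢ <;> omega

/-- The Laplacian on polynomials in two variables. -/
noncomputable def lap (p : MvPolynomial (Fin 2) ℝ) : MvPolynomial (Fin 2) ℝ :=
  pderiv 0 (pderiv 0 p) + pderiv 1 (pderiv 1 p)

private lemma lap_C_mul (a : ℝ) (f : MvPolynomial (Fin 2) ℝ) :
    lap (C a * f) = C a * lap f := by
  simp [lap, pderiv_C_mul, mul_add]

private lemma lap_isHomog {n : ℕ} {p : MvPolynomial (Fin 2) ℝ} (hp : p.IsHomogeneous n) :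
    (lap p).IsHomogeneous (n - 2) := by
  have h := fun i j : Fin 2 => pderiv_isHomog (pderiv_isHomog hp i) j
  have e : n - 1 - 1 = n - 2 := by omega
  rw [e] at h
  exact (h 0 0).add (h 1 1)

private lemma iter_lap_isHomog {n : ℕ} {p : MvPolynomial (Fin 2) ℝ}
    (hp : p.IsHomogeneous n) (k : ℕ) : (lap^[k] p).IsHomogeneous (n - 2 * k) := by
  induction k with
  | zero => simpa using hp
  | succ k ih =>
      rw [Function.iterate_succ_apply']
      have h := lap_isHomog ih
      rwa [show n - 2 * k - 2 = n - 2 * (k + 1) by omega] at h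

private lemma pderiv_of_homog_zero {p : MvPolynomial (Fin 2) ℝ}
    (hp : p.IsHomogeneous 0) (i : Fin 2) : pderiv i p = 0 := by
  conv_lhs => rw [p.as_sum]
  rw [map_sum]
  refine Finset.sum_eq_zero fun s hs => ?_
  have hd := degree_of_mem_support hp hs
  rw [deg2] at hd
  have hi : s i = 0 := by fin_cases i <;> simp_all <;> omega
  rw [pderiv_monomial, hi]
  simp

private lemma lap_eq_zero {n : ℕ} {p : MvPolynomial (Fin 2) ℝ}
    (hp : p.IsHomogeneous n) (hn : n ≤ 1) : lap p = 0 := by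
  have h0 : (pderiv (0 : Fin 2) p).IsHomogeneous 0 := by
    have := pderiv_isHomog hp 0; rwa [show n - 1 = 0 by omega] at this
  have h1 : (pderiv (1 : Fin 2) p).IsHomogeneous 0 := by
    have := pderiv_isHomog hp 1; rwa [show n - 1 = 0 by omega] at this
  simp [lap, pderiv_of_homog_zero h0, pderiv_of_homog_zero h1]

private noncomputable def Rq : MvPolynomial (Fin 2) ℝ := C (1/4 : ℝ) * (X 0 ^ 2 + X 1 ^ 2)

private lemma two_eq_C : (2 : MvPolynomial (Fin 2) ℝ) = C (2 : ℝ) :=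
  (map_ofNat C 2).symm

private lemma hX4 : (X 0 ^ 2 + X 1 ^ 2 : MvPolynomial (Fin 2) ℝ) = C (4 : ℝ) * Rq := by
  rw [Rq, ← mul_assoc, ← map_mul]
  norm_num

private lemma pderiv_Rq (i : Fin 2) : pderiv i Rq = C (1/2 : ℝ) * X i := by
  have h : (C (4⁻¹ : ℝ) : MvPolynomial (Fin 2) ℝ) * 2 = C (2⁻¹ : ℝ) := by
    rw [two_eq_C, ← map_mul]; norm_num
  fin_cases i
  · simp only [Rq, Fin.zero_eta, Fin.mk_one, Fin.isValue, one_div, map_add, pderiv_C_mul, pow_two, pderiv_mul, pderiv_C,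
      pderiv_X_self, pderiv_X_of_ne (by decide : (1:Fin 2) ≠ 0)]
    linear_combination X (0 : Fin 2) * h
  · simp only [Rq, Fin.zero_eta, Fin.mk_one, Fin.isValue, one_div, map_add, pderiv_C_mul, pow_two, pderiv_mul, pderiv_C,
      pderiv_X_self, pderiv_X_of_ne (by decide : (0:Fin 2) ≠ 1)]
    linear_combination X (1 : Fin 2) * h

private lemma pderiv_Rq_pow (i : Fin 2) (m : ℕ) :
    pderiv i (Rq ^ (m + 1)) = C (((m : ℝ) + 1) / 2) * Rq ^ m * X i := by
  rw [pderiv_pow, pderiv_Rq, Nat.add_sub_cancel]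
  rw [show ((m + 1 : ℕ) : MvPolynomial (Fin 2) ℝ) = C ((m + 1 : ℕ) : ℝ) from
    (map_natCast C _).symm]
  rw [show (((m : ℝ) + 1) / 2) = ((m + 1 : ℕ) : ℝ) * (1/2) by push_cast; ring, map_mul]
  ring

private lemma lap_mul (a b : MvPolynomial (Fin 2) ℝ) :
    lap (a * b) = lap a * b +
      2 * (pderiv 0 a * pderiv 0 b + pderiv 1 a * pderiv 1 b) + a * lap b := by
  simp only [lap, pderiv_mul, map_add]
  ring

private lemma lap_Rq : lap Rq = 1 := by
  have h : (1 : MvPolynomial (Fin 2) ℝ) = C (1/2 : ℝ) + C (1/2 : ℝ) := by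
    rw [← map_add]; norm_num
  rw [h]
  simp [lap, pderiv_Rq, pderiv_C_mul, pderiv_X_self, pderiv_X_of_ne]

private lemma lap_Rq_pow (m : ℕ) :
    lap (Rq ^ (m + 1)) = C (((m : ℝ) + 1) ^ 2) * Rq ^ m := by
  induction m with
  | zero =>
      rw [pow_one, lap_Rq]
      norm_num
  | succ m ih =>
      have cross : (2 : MvPolynomial (Fin 2) ℝ) *
          (C (((m : ℝ) + 1) / 2) * Rq ^ m * X 0 * (C (1/2 : ℝ) * X 0) +
           C (((m : ℝ) + 1) / 2) * Rq ^ m * X 1 * (C (1/2 : ℝ) * X 1)) =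
          C (2 * ((m : ℝ) + 1)) * Rq ^ (m + 1) := by
        calc (2 : MvPolynomial (Fin 2) ℝ) *
            (C (((m : ℝ) + 1) / 2) * Rq ^ m * X 0 * (C (1/2 : ℝ) * X 0) +
             C (((m : ℝ) + 1) / 2) * Rq ^ m * X 1 * (C (1/2 : ℝ) * X 1))
            = 2 * C (((m : ℝ) + 1) / 2) * C (1/2 : ℝ) * Rq ^ m * (X 0 ^ 2 + X 1 ^ 2) := by
              ring
          _ = 2 * C (((m : ℝ) + 1) / 2) * C (1/2 : ℝ) * Rq ^ m * (C (4 : ℝ) * Rq) := by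
              rw [hX4]
          _ = C (2 : ℝ) * (C (((m : ℝ) + 1) / 2) * C (1/2 : ℝ) * C (4 : ℝ)) * Rq ^ (m + 1) := by
              rw [← two_eq_C]; ring
          _ = C (2 * ((m : ℝ) + 1)) * Rq ^ (m + 1) := by
              rw [← map_mul, ← map_mul, ← map_mul]; congr 1; ring
      rw [show m + 1 + 1 = (m + 1) + 1 from rfl, pow_succ, mul_comm (Rq ^ (m+1)) Rq]
      rw [lap_mul, lap_Rq, pderiv_Rq, pderiv_Rq, pderiv_Rq_pow, pderiv_Rq_pow, ih]
      rw [show (2 : MvPolynomial (Fin 2) ℝ) *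
          (C (1/2 : ℝ) * X 0 * (C (((m : ℝ) + 1) / 2) * Rq ^ m * X 0) +
           C (1/2 : ℝ) * X 1 * (C (((m : ℝ) + 1) / 2) * Rq ^ m * X 1)) =
          C (2 * ((m : ℝ) + 1)) * Rq ^ (m + 1) from by rw [← cross]; ring]
      have hone : (1 : MvPolynomial (Fin 2) ℝ) = C (1 : ℝ) := map_one C |>.symm
      calc (1 : MvPolynomial (Fin 2) ℝ) * Rq ^ (m+1) +
            C (2 * ((m : ℝ) + 1)) * Rq ^ (m + 1) + Rq * (C (((m : ℝ) + 1) ^ 2) * Rq ^ m)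
          = (C (1:ℝ) + C (2 * ((m : ℝ) + 1)) + C (((m : ℝ) + 1) ^ 2)) * Rq ^ (m+1) := by
            rw [hone]; ring
        _ = C ((((m + 1 : ℕ) : ℝ) + 1) ^ 2) * Rq ^ (m + 1) := by
            rw [← map_add, ← map_add]; congr 1; push_cast; ring

private lemma lap_Rq_pow_mul (m n : ℕ) (f : MvPolynomial (Fin 2) ℝ) (hf : f.IsHomogeneous n) :
    lap (Rq ^ (m + 1) * f) =
      Rq ^ (m + 1) * lap f +
        C (((m : ℝ) + 1) * (((m : ℝ) + 1) + n)) * (Rq ^ m * f) := by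
  rw [lap_mul, lap_Rq_pow, pderiv_Rq_pow, pderiv_Rq_pow]
  have cross : (2 : MvPolynomial (Fin 2) ℝ) *
      (C (((m : ℝ) + 1) / 2) * Rq ^ m * X 0 * pderiv 0 f +
       C (((m : ℝ) + 1) / 2) * Rq ^ m * X 1 * pderiv 1 f) =
      C (((m : ℝ) + 1) * n) * (Rq ^ m * f) := by
    calc (2 : MvPolynomial (Fin 2) ℝ) *
        (C (((m : ℝ) + 1) / 2) * Rq ^ m * X 0 * pderiv 0 f +
         C (((m : ℝ) + 1) / 2) * Rq ^ m * X 1 * pderiv 1 f)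
        = 2 * C (((m : ℝ) + 1) / 2) * Rq ^ m *
            (X 0 * pderiv 0 f + X 1 * pderiv 1 f) := by ring
      _ = 2 * C (((m : ℝ) + 1) / 2) * Rq ^ m * (C (n : ℝ) * f) := by rw [euler hf]
      _ = C (2 : ℝ) * C (((m : ℝ) + 1) / 2) * C (n : ℝ) * (Rq ^ m * f) := by
          rw [← two_eq_C]; ring
      _ = C (((m : ℝ) + 1) * n) * (Rq ^ m * f) := by
          rw [← map_mul, ← map_mul]; congr 1; ring
  rw [cross]
  have hc : C ((((m : ℝ) + 1)) ^ 2) + C (((m : ℝ) + 1) * n) =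
      (C (((m : ℝ) + 1) * (((m : ℝ) + 1) + n)) : MvPolynomial (Fin 2) ℝ) := by
    rw [← map_add]; congr 1; ring
  linear_combination (Rq ^ m * f) * hc

private lemma lap_sum {ι : Type*} (s : Finset ι) (f : ι → MvPolynomial (Fin 2) ℝ) :
    lap (∑ i ∈ s, f i) = ∑ i ∈ s, lap (f i) := by
  simp [lap, map_sum, Finset.sum_add_distrib]

private noncomputable def cc (j k : ℕ) : ℝ :=
  (-1 : ℝ) ^ k * (Nat.factorial (j - k)) /
    ((Nat.factorial (j + 1)) * (Nat.factorial (k + 1)))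

private noncomputable def ee (j k : ℕ) : ℝ :=
  ((k : ℝ) + 1) * (((k : ℝ) + 1) + ((j - 2 * k : ℕ) : ℝ))

private lemma e0 (j : ℕ) : cc j 0 * ee j 0 = 1 := by
  simp only [cc, ee, Nat.sub_zero, pow_zero, one_mul, Nat.mul_zero, Nat.cast_zero, zero_add]
  rw [Nat.factorial_succ j]
  have h1 : (Nat.factorial j : ℝ) ≠ 0 := Nat.cast_ne_zero.mpr (Nat.factorial_ne_zero j)
  have h2 : ((j : ℝ) + 1) ≠ 0 := by positivity
  field_simp
  push_cast
  ring

private lemma tele (j i : ℕ) (h : 2 * (i + 1) ≤ j) :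
    cc j i + cc j (i + 1) * ee j (i + 1) = 0 := by
  simp only [cc, ee]
  have h1 : j - i = (j - (i + 1)) + 1 := by omega
  have hf1 : (Nat.factorial (j - i) : ℝ) = ((j : ℝ) - i) * Nat.factorial (j - (i + 1)) := by
    rw [h1, Nat.factorial_succ]
    push_cast [Nat.cast_sub (by omega : i + 1 ≤ j)]
    ring
  have hf2 : (Nat.factorial (i + 1 + 1) : ℝ) = ((i : ℝ) + 2) * Nat.factorial (i + 1) := by
    rw [Nat.factorial_succ]
    push_cast
    ring
  have hcast : ((j - 2 * (i + 1) : ℕ) : ℝ) = (j : ℝ) - 2 * i - 2 := by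
    push_cast [Nat.cast_sub h]
    ring
  have hne1 : (Nat.factorial (j + 1) : ℝ) ≠ 0 := Nat.cast_ne_zero.mpr (Nat.factorial_ne_zero _)
  have hne2 : (Nat.factorial (i + 1) : ℝ) ≠ 0 := Nat.cast_ne_zero.mpr (Nat.factorial_ne_zero _)
  have hne3 : ((i : ℝ) + 2) ≠ 0 := by positivity
  rw [hf1, hf2, hcast, pow_succ]
  field_simp
  push_cast
  ring

theorem stmt8 (j : ℕ) (p : MvPolynomial (Fin 2) ℝ) (hp : p.IsHomogeneous j) :
    lap (∑ k ∈ Finset.range (j / 2 + 1),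
      MvPolynomial.C (((-1 : ℝ) ^ k * (Nat.factorial (j - k)) /
          ((Nat.factorial (j + 1)) * (Nat.factorial (k + 1))))) *
        (MvPolynomial.C (1 / 4 : ℝ) * (X 0 ^ 2 + X 1 ^ 2)) ^ (k + 1) *
        (lap^[k] p)) = p := by
  have hsum : ∀ k : ℕ,
      MvPolynomial.C (((-1 : ℝ) ^ k * (Nat.factorial (j - k)) /
          ((Nat.factorial (j + 1)) * (Nat.factorial (k + 1))))) *
        (MvPolynomial.C (1 / 4 : ℝ) * (X 0 ^ 2 + X 1 ^ 2)) ^ (k + 1) *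
        (lap^[k] p) = C (cc j k) * (Rq ^ (k + 1) * lap^[k] p) := by
    intro k
    rw [mul_assoc]
    rfl
  rw [Finset.sum_congr rfl fun k _ => hsum k, lap_sum]
  have step : ∀ k ∈ Finset.range (j / 2 + 1),
      lap (C (cc j k) * (Rq ^ (k + 1) * lap^[k] p)) =
        C (cc j k) * (Rq ^ (k + 1) * lap^[k + 1] p) +
          C (cc j k * ee j k) * (Rq ^ k * lap^[k] p) := by
    intro k hk
    rw [lap_C_mul, lap_Rq_pow_mul k (j - 2 * k) _ (iter_lap_isHomog hp k),
      ← Function.iterate_succ_apply' lap k p, mul_add]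
    congr 1
    rw [← mul_assoc, ← map_mul]
    rfl
  rw [Finset.sum_congr rfl step, Finset.sum_add_distrib, Finset.sum_range_succ,
    Finset.sum_range_succ']
  have hzero : lap^[j / 2 + 1] p = 0 := by
    rw [Function.iterate_succ_apply']
    exact lap_eq_zero (iter_lap_isHomog hp (j / 2)) (by omega)
  rw [hzero, mul_zero, mul_zero, add_zero]
  have h0 : C (cc j 0 * ee j 0) * (Rq ^ 0 * lap^[0] p) = p := by
    rw [e0, map_one, pow_zero, Function.iterate_zero_apply, one_mul, one_mul]
  rw [h0, ← add_assoc, ← Finset.sum_add_distrib]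
  have hterm : ∀ i ∈ Finset.range (j / 2),
      C (cc j i) * (Rq ^ (i + 1) * lap^[i + 1] p) +
        C (cc j (i + 1) * ee j (i + 1)) * (Rq ^ (i + 1) * lap^[i + 1] p) = 0 := by
    intro i hi
    have h2 : 2 * (i + 1) ≤ j := by
      have := Finset.mem_range.mp hi
      omega
    rw [← add_mul, ← map_add, tele j i h2, map_zero, zero_mul]
  rw [Finset.sum_congr rfl hterm, Finset.sum_const_zero, zero_add]
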